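/- Suppose E_v is not discrete, so H^∞_v(G) is normed. Then H^∞_v(G) is complete if and only if every function f : E_v → ℂ which is a uniform limit on E_v (with respect to the weight v, i.e., sup_{z∈E_v} v(z)|f_n(z) − f(z)| → 0 for some sequence (f_n) in H^∞_v(G)) extends to a holomorphic function on G. -/

import Mathlib

open Complex Metric Set Filter Topology MeasureTheory

noncomputable section

/-- `f` is holomorphic on `G` and `sup_{z in G} v z * |f z| < ∞`. -/
def MemHv (G : Set ℂ) (v : ℂ → ℝ) (f : ℂ → ℂ) : Prop :=
  DifferentiableOn ℂ f G ∧ ∃ C : ℝ, ∀ z ∈ G, v z * ‖f z‖ ≤ C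

/-- The weighted sup-seminorm `‖f‖_v`. -/
def HvNorm (G : Set ℂ) (v : ℂ → ℝ) (f : ℂ → ℂ) : ℝ :=
  sSup ((fun z => v z * ‖f z‖) '' G)

/-- A `‖·‖_v`-Cauchy sequence. -/
def HvCauchy (G : Set ℂ) (v : ℂ → ℝ) (F : ℕ → ℂ → ℂ) : Prop :=
  ∀ ε : ℝ, 0 < ε → ∃ N : ℕ, ∀ m ≥ N, ∀ n ≥ N, ∀ z ∈ G,
    v z * ‖F m z - F n z‖ ≤ ε

/-- Convergence in the `‖·‖_v`-seminorm. -/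
def HvTendsto (G : Set ℂ) (v : ℂ → ℝ) (F : ℕ → ℂ → ℂ) (f : ℂ → ℂ) : Prop :=
  ∀ ε : ℝ, 0 < ε → ∃ N : ℕ, ∀ n ≥ N, ∀ z ∈ G,
    v z * ‖F n z - f z‖ ≤ ε

/-- Completeness of `H^∞_v(G)`: every Cauchy sequence converges in the space. -/
def HvComplete (G : Set ℂ) (v : ℂ → ℝ) : Prop :=
  ∀ F : ℕ → ℂ → ℂ, (∀ n, MemHv G v (F n)) → HvCauchy G v F →
    ∃ f : ℂ → ℂ, MemHv G v f ∧ HvTendsto G v F f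

/-- The seminorm `‖·‖_v` is a norm: `‖f‖_v = 0` forces `f = 0` on `G`. -/
def HvNormed (G : Set ℂ) (v : ℂ → ℝ) : Prop :=
  ∀ f : ℂ → ℂ, MemHv G v f → (∀ z ∈ G, v z * ‖f z‖ = 0) →
    ∀ z ∈ G, f z = 0

/-- `H^∞_v(G)` is a Banach space. -/
def IsBanachHv (G : Set ℂ) (v : ℂ → ℝ) : Prop :=
  HvNormed G v ∧ HvComplete G v

theorem stmt9 (G : Set ℂ) (v : ℂ → ℝ) (hG : IsOpen G) (hGc : IsConnected G)
    (hv : ∀ z ∈ G, 0 ≤ v z)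
    (hacc : ∃ z ∈ G, AccPt z (𝓟 {w ∈ G | 0 < v w})) :
    HvComplete G v ↔
      ∀ f : ℂ → ℂ,
        (∃ F : ℕ → ℂ → ℂ, (∀ n, MemHv G v (F n)) ∧
          ∀ ε : ℝ, 0 < ε → ∃ N : ℕ, ∀ n ≥ N, ∀ z ∈ {w ∈ G | 0 < v w},
            v z * ‖F n z - f z‖ ≤ ε) →
        ∃ g : ℂ → ℂ, DifferentiableOn ℂ g G ∧
          ∀ z ∈ {w ∈ G | 0 < v w}, g z = f z := by
  constructor
  · -- completeness → extension property
    intro hcomp f ⟨F, hF, hconv⟩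
    -- F is HvCauchy on G
    have hvzero : ∀ z ∈ G, ¬ (0 < v z) → v z = 0 := fun z hz h =>
      le_antisymm (not_lt.mp h) (hv z hz)
    have hcau : HvCauchy G v F := by
      intro ε hε
      obtain ⟨N, hN⟩ := hconv (ε / 2) (by linarith)
      refine ⟨N, fun m hm n hn z hz => ?_⟩
      by_cases hzE : 0 < v z
      · have h1 := hN m hm z ⟨hz, hzE⟩
        have h2 := hN n hn z ⟨hz, hzE⟩
        have htri : ‖F m z - F n z‖ ≤
            ‖F m z - f z‖ + ‖f z - F n z‖ :=
          norm_sub_le_norm_sub_add_norm_sub _ _ _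
        have h2' : v z * ‖f z - F n z‖ ≤ ε / 2 := by
          rwa [norm_sub_rev]
        nlinarith [hv z hz, norm_nonneg (F m z - F n z)]
      · simp [hvzero z hz hzE, hε.le]
    obtain ⟨g, hgmem, hgt⟩ := hcomp F hF hcau
    refine ⟨g, hgmem.1, fun z hz => ?_⟩
    have key : ∀ ε : ℝ, 0 < ε → ‖g z - f z‖ * v z ≤ ε := by
      intro ε hε
      obtain ⟨N1, hN1⟩ := hgt (ε / 2) (by linarith)
      obtain ⟨N2, hN2⟩ := hconv (ε / 2) (by linarith)
      have h1 := hN1 (max N1 N2) (le_max_left _ _) z hz.1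
      have h2 := hN2 (max N1 N2) (le_max_right _ _) z hz
      have htri : ‖g z - f z‖ ≤
          ‖g z - F (max N1 N2) z‖ + ‖F (max N1 N2) z - f z‖ :=
        norm_sub_le_norm_sub_add_norm_sub _ _ _
      have h1' : v z * ‖g z - F (max N1 N2) z‖ ≤ ε / 2 := by
        rwa [norm_sub_rev]
      nlinarith [hv z hz.1]
    have h0 : ‖g z - f z‖ * v z ≤ 0 := by
      refine le_of_forall_pos_le_add (fun ε hε => ?_)
      simpa using key ε hε
    have habs : ‖g z - f z‖ = 0 := by
      nlinarith [norm_nonneg (g z - f z), hz.2]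
    have := norm_eq_zero.mp habs
    linear_combination this
  · -- extension property → completeness
    intro hext F hF hcau
    have hvzero : ∀ z ∈ G, ¬ (0 < v z) → v z = 0 := fun z hz h =>
      le_antisymm (not_lt.mp h) (hv z hz)
    -- pointwise Cauchy on E_v
    have hptcau : ∀ z ∈ {w ∈ G | 0 < v w}, CauchySeq (fun n => F n z) := by
      intro z hz
      rw [Metric.cauchySeq_iff]
      intro ε hε
      obtain ⟨N, hN⟩ := hcau (ε * v z / 2) (by have := hz.2; positivity)
      refine ⟨N, fun m hm n hn => ?_⟩
      have h := hN m hm n hn z hz.1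
      have : ‖F m z - F n z‖ ≤ ε / 2 := by
        nlinarith [hz.2]
      calc dist (F m z) (F n z) = ‖F m z - F n z‖ := by
            rw [dist_eq_norm]
        _ ≤ ε / 2 := this
        _ < ε := by linarith
    set f : ℂ → ℂ := fun z => limUnder atTop (fun n => F n z) with hf
    have hftends : ∀ z ∈ {w ∈ G | 0 < v w},
        Tendsto (fun n => F n z) atTop (𝓝 (f z)) := fun z hz =>
      (hptcau z hz).tendsto_limUnder
    -- uniform convergence on E_v in v-norm
    have hunif : ∀ ε : ℝ, 0 < ε → ∃ N : ℕ, ∀ n ≥ N, ∀ z ∈ {w ∈ G | 0 < v w},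
        v z * ‖F n z - f z‖ ≤ ε := by
      intro ε hε
      obtain ⟨N, hN⟩ := hcau ε hε
      refine ⟨N, fun n hn z hz => ?_⟩
      have hlim : Tendsto (fun m => v z * ‖F n z - F m z‖) atTop
          (𝓝 (v z * ‖F n z - f z‖)) := by
        exact (Filter.Tendsto.const_mul _ ((continuous_norm.tendsto _).comp
          (((hftends z hz).const_sub (F n z)).comp tendsto_id)))
      refine le_of_tendsto hlim (eventually_atTop.mpr ⟨N, fun m hm => ?_⟩)
      exact hN n hn m hm z hz.1
    obtain ⟨g, hgdiff, hgf⟩ := hext f ⟨F, hF, hunif⟩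
    refine ⟨g, ⟨hgdiff, ?_⟩, ?_⟩
    · -- boundedness of g
      obtain ⟨N, hN⟩ := hunif 1 one_pos
      obtain ⟨C, hC⟩ := (hF N).2
      refine ⟨max (C + 1) 0, fun z hz => ?_⟩
      by_cases hzE : 0 < v z
      · have h1 := hN N le_rfl z ⟨hz, hzE⟩
        have h2 := hC z hz
        rw [hgf z ⟨hz, hzE⟩]
        have htri : ‖f z‖ ≤
            ‖F N z - f z‖ + ‖F N z‖ := by
          calc ‖f z‖ = ‖f z - F N z + F N z‖ := by ring_nf
            _ ≤ ‖f z - F N z‖ + ‖F N z‖ :=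
              norm_add_le _ _
            _ = ‖F N z - f z‖ + ‖F N z‖ := by
              rw [norm_sub_rev]
        have : v z * ‖f z‖ ≤ C + 1 := by nlinarith [hv z hz]
        exact this.trans (le_max_left _ _)
      · simp [hvzero z hz hzE, le_max_right]
    · -- HvTendsto F g
      intro ε hε
      obtain ⟨N, hN⟩ := hunif ε hε
      refine ⟨N, fun n hn z hz => ?_⟩
      by_cases hzE : 0 < v z
      · rw [hgf z ⟨hz, hzE⟩]; exact hN n hn z ⟨hz, hzE⟩
      · simp [hvzero z hz hzE, hε.le]
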